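/- arXiv:1410.3209 — 4 statements merged into one kernel-verified Lean document; each statement's English description precedes it below -/
import Mathlib

section
/- Let N ≥ 2 and let T be an N×N complex special unitary matrix (T unitary with det T = 1). Suppose there exist unit vectors ψ₀, ψ₁ ∈ ℂᴺ with ⟨ψ₁, ψ₀⟩ = 0 such that: (i) T maps the line spanned by ψ₀ onto the line spanned by ψ₁ and vice versa, i.e. there are scalars c₀, c₁ ∈ ℂ with T ψ₀ = c₁ • ψ₁ and T ψ₁ = c₀ • ψ₀; and (ii) T ψ = ψ for every ψ ∈ ℂᴺ orthogonal to both ψ₀ and ψ₁. Then there exist a real number θ and a special unitary N×N matrix V such that T = V * (Ô(θ) ⊕ I_{N−2}) * V†, where Ô(θ) is the 2×2 matrix with zero diagonal and off-diagonal entries i·e^{−iθ} (top right) and i·e^{iθ} (bottom left), and Ô(θ) ⊕ I_{N−2} denotes the block diagonal matrix with blocks Ô(θ) and the (N−2)×(N−2) identity. -/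
open Matrix Complex

/-- The 2×2 matrix `Ô(θ) = !![0, i·e^{−iθ}; i·e^{iθ}, 0]`. -/
noncomputable def Ohat (θ : ℝ) : Matrix (Fin 2) (Fin 2) ℂ :=
  !![0, Complex.I * Complex.exp (-(Complex.I * (θ : ℂ)));
     Complex.I * Complex.exp (Complex.I * (θ : ℂ)), 0]

/-- Theorem 2 of the paper: any special unitary `T` that swaps (up to phase) the lines of
a pair of orthonormal vectors `ψ₀, ψ₁` and fixes every vector orthogonal to both has the
form `T = V (Ô(θ) ⊕ I_{N−2}) V†` for some real `θ` and some special unitary `V`. -/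
theorem swap_gate_normal_form
    {N : ℕ} (hN : 2 ≤ N)
    (T : Matrix (Fin N) (Fin N) ℂ)
    (hTu : T * Tᴴ = 1) (hTdet : T.det = 1)
    (ψ₀ ψ₁ : Fin N → ℂ)
    (hψ₀ : star ψ₀ ⬝ᵥ ψ₀ = 1) (hψ₁ : star ψ₁ ⬝ᵥ ψ₁ = 1)
    (horth : star ψ₁ ⬝ᵥ ψ₀ = 0)
    (hswap : ∃ c₀ c₁ : ℂ, T *ᵥ ψ₀ = c₁ • ψ₁ ∧ T *ᵥ ψ₁ = c₀ • ψ₀)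
    (hfix : ∀ ψ : Fin N → ℂ, star ψ₀ ⬝ᵥ ψ = 0 → star ψ₁ ⬝ᵥ ψ = 0 → T *ᵥ ψ = ψ) :
    ∃ (θ : ℝ) (V : Matrix (Fin N) (Fin N) ℂ), V * Vᴴ = 1 ∧ V.det = 1 ∧
      T = V * (Matrix.reindex (finSumFinEquiv.trans (finCongr (Nat.add_sub_cancel' hN)))
                (finSumFinEquiv.trans (finCongr (Nat.add_sub_cancel' hN)))
                (Matrix.fromBlocks (Ohat θ) 0 0 (1 : Matrix (Fin (N - 2)) (Fin (N - 2)) ℂ))) * Vᴴ := by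
  classical
  obtain ⟨c₀, c₁, h0, h1⟩ := hswap
  have hi0lt : 0 < N := by omega
  have hi1lt : 1 < N := by omega
  set i0 : Fin N := ⟨0, hi0lt⟩ with hi0def
  set i1 : Fin N := ⟨1, hi1lt⟩ with hi1def
  have hi01 : i0 ≠ i1 := by simp [hi0def, hi1def, Fin.ext_iff]
  set e : Fin 2 ⊕ Fin (N - 2) ≃ Fin N :=
    finSumFinEquiv.trans (finCongr (Nat.add_sub_cancel' hN)) with hedef
  have he0 : e (Sum.inl 0) = i0 := by
    simp [hedef, Equiv.trans_apply, Fin.ext_iff, hi0def]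
  have he1 : e (Sum.inl 1) = i1 := by
    simp [hedef, Equiv.trans_apply, Fin.ext_iff, hi1def]
  have heinr : ∀ m : Fin (N - 2), ((e (Sum.inr m) : Fin N) : ℕ) = 2 + m := by
    intro m; simp [hedef, Equiv.trans_apply]
  have heinr0 : ∀ m : Fin (N - 2), e (Sum.inr m) ≠ i0 := by
    intro m h
    have := congrArg Fin.val h
    rw [heinr m] at this; simp [hi0def] at this
  have heinr1 : ∀ m : Fin (N - 2), e (Sum.inr m) ≠ i1 := by
    intro m h
    have := congrArg Fin.val h
    rw [heinr m] at this; simp [hi1def] at this; omega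
  have horth' : star ψ₀ ⬝ᵥ ψ₁ = 0 := by
    have := congrArg (starRingEnd ℂ) horth
    simpa [dotProduct, map_sum, mul_comm] using this
  -- build orthonormal basis
  set v : Fin N → EuclideanSpace ℂ (Fin N) := fun i => if i = i0 then WithLp.toLp 2 ψ₀ else WithLp.toLp 2 ψ₁ with hvdef
  have hv : Orthonormal ℂ (({i0, i1} : Set (Fin N)).restrict v) := by
    rw [orthonormal_iff_ite]
    rintro ⟨i, hi⟩ ⟨j, hj⟩
    rcases hi with rfl | hi <;> rcases hj with rfl | hj
    · rw [EuclideanSpace.inner_eq_star_dotProduct]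
      simpa [v, Set.restrict, EuclideanSpace.inner_eq_star_dotProduct, dotProduct_comm _ (star _)] using hψ₀
    · rw [Set.mem_singleton_iff] at hj; subst hj
      simpa [v, hi01, hi01.symm, Subtype.ext_iff, Set.restrict, EuclideanSpace.inner_eq_star_dotProduct,
          dotProduct_comm _ (star _)]
        using horth'
    · rw [Set.mem_singleton_iff] at hi; subst hi
      simpa [v, hi01, hi01.symm, Subtype.ext_iff, Set.restrict, EuclideanSpace.inner_eq_star_dotProduct,
          dotProduct_comm _ (star _)]
        using horth
    · rw [Set.mem_singleton_iff] at hi hj; subst hi; subst hj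
      rw [EuclideanSpace.inner_eq_star_dotProduct]
      simpa [v, hi01.symm, Set.restrict, EuclideanSpace.inner_eq_star_dotProduct, dotProduct_comm _ (star _)]
        using hψ₁
  obtain ⟨b, hb⟩ := hv.exists_orthonormalBasis_extension_of_card_eq (by simp)
  have hb0 : (b i0 : Fin N → ℂ) = ψ₀ := by
    have := hb i0 (by simp); rw [this]; simp [v]
  have hb1 : (b i1 : Fin N → ℂ) = ψ₁ := by
    have := hb i1 (by simp); rw [this]; simp [v, hi01.symm]
  have hbo : ∀ i j : Fin N,
      star (b i : Fin N → ℂ) ⬝ᵥ (b j : Fin N → ℂ) = if i = j then 1 else 0 := by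
    intro i j
    simpa [EuclideanSpace.inner_eq_star_dotProduct, dotProduct_comm _ (star _)] using
      (orthonormal_iff_ite.mp b.orthonormal i j)
  -- the unitary of basis columns
  set V₀ : Matrix (Fin N) (Fin N) ℂ := Matrix.of fun j i => b i j with hV0def
  have hV0u : V₀ᴴ * V₀ = 1 := by
    ext i k
    have := hbo i k
    simpa [Matrix.mul_apply, Matrix.conjTranspose_apply, Matrix.one_apply, hV0def,
      dotProduct] using this
  have hV0u' : V₀ * V₀ᴴ = 1 := mul_eq_one_comm.mp hV0u
  -- unnormalized block matrix
  set M₀ : Matrix (Fin 2 ⊕ Fin (N - 2)) (Fin 2 ⊕ Fin (N - 2)) ℂ :=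
    Matrix.fromBlocks !![(0 : ℂ), c₀; c₁, 0] 0 0 1 with hM0def
  set B₀ : Matrix (Fin N) (Fin N) ℂ := Matrix.reindex e e M₀ with hB0def
  have hTV : T * V₀ = V₀ * B₀ := by
    ext j i
    obtain ⟨i', rfl⟩ := e.surjective i
    have hR : (V₀ * B₀) j (e i') = ∑ k', V₀ j (e k') * M₀ k' i' := by
      rw [Matrix.mul_apply]
      refine (Fintype.sum_equiv e (fun k' => V₀ j (e k') * M₀ k' i') _ ?_).symm
      intro k'
      simp [hB0def, Matrix.reindex_apply, Matrix.submatrix_apply]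
    rw [hR, Matrix.mul_apply, Fintype.sum_sum_type]
    rcases i' with l | m
    · fin_cases l <;> beta_reduce <;> simp only [Fin.zero_eta, Fin.mk_one]
      · have hL : ∑ k, T j k * V₀ k (e (Sum.inl 0)) = c₁ * ψ₁ j := by
          have := congrFun h0 j
          simpa [Matrix.mulVec, dotProduct, hV0def, he0, hb0, mul_comm] using this
        rw [hL]
        simp [hM0def, hV0def, Fin.sum_univ_two, he1, hb1, mul_comm]
      · have hL : ∑ k, T j k * V₀ k (e (Sum.inl 1)) = c₀ * ψ₀ j := by
          have := congrFun h1 j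
          simpa [Matrix.mulVec, dotProduct, hV0def, he1, hb1, mul_comm] using this
        rw [hL]
        simp [hM0def, hV0def, Fin.sum_univ_two, he0, hb0, mul_comm]
    · have ho0 : star ψ₀ ⬝ᵥ (b (e (Sum.inr m)) : Fin N → ℂ) = 0 := by
        have := hbo i0 (e (Sum.inr m))
        rw [hb0, if_neg (fun h => heinr0 m h.symm)] at this
        exact this
      have ho1 : star ψ₁ ⬝ᵥ (b (e (Sum.inr m)) : Fin N → ℂ) = 0 := by
        have := hbo i1 (e (Sum.inr m))
        rw [hb1, if_neg (fun h => heinr1 m h.symm)] at this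
        exact this
      have hL : ∑ k, T j k * V₀ k (e (Sum.inr m)) = b (e (Sum.inr m)) j := by
        have := congrFun (hfix _ ho0 ho1) j
        simpa [Matrix.mulVec, dotProduct, hV0def] using this
      rw [hL]
      simp [hM0def, hV0def, Matrix.one_apply, Fin.sum_univ_two, mul_ite,
        Finset.sum_ite_eq']
  -- determinant and phase facts
  set d : ℂ := V₀.det with hddef
  have hdstar : star d * d = 1 := by
    have := congrArg Matrix.det hV0u
    rwa [Matrix.det_mul, Matrix.det_conjTranspose, Matrix.det_one] at this
  have hd0 : d ≠ 0 := by
    intro h; rw [h, mul_zero] at hdstar; exact zero_ne_one hdstar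
  have hsd : star d = d⁻¹ := eq_inv_of_mul_eq_one_left hdstar
  have hc01 : c₀ * c₁ = -1 := by
    have hdetB : B₀.det = 1 := by
      have := congrArg Matrix.det hTV
      rw [Matrix.det_mul, Matrix.det_mul, hTdet, one_mul, ← hddef] at this
      exact (mul_left_cancel₀ hd0 ((mul_one d).trans this)).symm
    have : B₀.det = -(c₀ * c₁) := by
      rw [hB0def, Matrix.det_reindex_self, hM0def, Matrix.det_fromBlocks_zero₂₁,
        Matrix.det_one, mul_one, Matrix.det_fin_two_of]
      ring
    rw [this] at hdetB
    linear_combination -hdetB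
  have hc1u : star c₁ * c₁ = 1 := by
    have hTu' : Tᴴ * T = 1 := mul_eq_one_comm.mp hTu
    have lhs : star (T *ᵥ ψ₀) ⬝ᵥ (T *ᵥ ψ₀) = 1 := by
      rw [Matrix.star_mulVec, Matrix.dotProduct_mulVec, Matrix.vecMul_vecMul, hTu',
        Matrix.vecMul_one, hψ₀]
    rw [h0] at lhs
    simpa [star_smul, smul_dotProduct, dotProduct_smul, smul_eq_mul, hψ₁,
      mul_comm, mul_assoc, mul_left_comm] using lhs
  have hc1ne : c₁ ≠ 0 := by
    rintro rfl; rw [mul_zero] at hc01; exact absurd hc01 (by norm_num)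
  have habsc1 : ‖c₁‖ = 1 := by
    have h2 : (Complex.normSq c₁ : ℂ) = 1 := by
      rw [← Complex.mul_conj, mul_comm]
      simpa [Complex.star_def] using hc1u
    have h3 : Complex.normSq c₁ = 1 := by exact_mod_cast h2
    rw [Complex.norm_def, h3, Real.sqrt_one]
  have habsd : ‖d‖ = 1 := by
    have h2 : (Complex.normSq d : ℂ) = 1 := by
      rw [← Complex.mul_conj, mul_comm]
      simpa [Complex.star_def] using hdstar
    have h3 : Complex.normSq d = 1 := by exact_mod_cast h2
    rw [Complex.norm_def, h3, Real.sqrt_one]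
  set z : ℂ := -Complex.I * c₁ * star d with hzdef
  have habsz : ‖z‖ = 1 := by
    rw [hzdef, norm_mul, norm_mul, norm_neg, Complex.norm_I, Complex.star_def,
      Complex.norm_conj, habsc1, habsd]
    ring
  set θ : ℝ := z.arg with hθdef
  have hexp : Complex.exp (Complex.I * (θ : ℂ)) = z := by
    have h := Complex.norm_mul_exp_arg_mul_I z
    rw [habsz, Complex.ofReal_one, one_mul] at h
    rw [mul_comm]; exact h
  have key1 : Complex.I * Complex.exp (Complex.I * (θ : ℂ)) = c₁ * star d := by
    rw [hexp, hzdef]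
    have : Complex.I * (-Complex.I * c₁ * star d)
        = -(Complex.I * Complex.I) * (c₁ * star d) := by ring
    rw [this, Complex.I_mul_I]; ring
  have hsdne : star d ≠ 0 := by rw [hsd]; exact inv_ne_zero hd0
  have hne : c₁ * star d ≠ 0 := mul_ne_zero hc1ne hsdne
  have key0 : Complex.I * Complex.exp (-(Complex.I * (θ : ℂ))) = c₀ * d := by
    have hm1 : (c₁ * star d) * (Complex.I * Complex.exp (-(Complex.I * (θ : ℂ)))) = -1 := by
      rw [← key1]
      have : Complex.I * Complex.exp (Complex.I * (θ : ℂ)) *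
            (Complex.I * Complex.exp (-(Complex.I * (θ : ℂ))))
          = Complex.I * Complex.I *
            Complex.exp (Complex.I * (θ : ℂ) + -(Complex.I * (θ : ℂ))) := by
        rw [Complex.exp_add]; ring
      rw [this, Complex.I_mul_I]; simp
    have hm2 : (c₁ * star d) * (c₀ * d) = -1 := by
      have : (c₁ * star d) * (c₀ * d) = (c₀ * c₁) * (star d * d) := by ring
      rw [this, hc01, hdstar]; ring
    exact mul_left_cancel₀ hne (hm1.trans hm2.symm)
  -- the diagonal phase fix
  set g : Fin N → ℂ := fun i => if i = i0 then d⁻¹ else 1 with hgdef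
  set D : Matrix (Fin N) (Fin N) ℂ := Matrix.diagonal g with hDdef
  have hDH : Dᴴ = Matrix.diagonal (fun i => star (g i)) := by
    rw [hDdef, Matrix.diagonal_conjTranspose]; rfl
  have hgu : ∀ i, g i * star (g i) = 1 := by
    intro i
    by_cases h : i = i0
    · simp only [hgdef, if_pos h, star_inv₀, hsd, inv_inv]
      exact inv_mul_cancel₀ hd0
    · simp [hgdef, h]
  have hDD : D * Dᴴ = 1 := by
    rw [hDH, hDdef, Matrix.diagonal_mul_diagonal]
    have : (fun i => g i * star (g i)) = fun _ => (1 : ℂ) := funext hgu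
    rw [this]
    exact Matrix.diagonal_one
  set V : Matrix (Fin N) (Fin N) ℂ := V₀ * D with hVdef2
  have hVu : V * Vᴴ = 1 := by
    rw [hVdef2, Matrix.conjTranspose_mul]
    have : V₀ * D * (Dᴴ * V₀ᴴ) = V₀ * (D * Dᴴ) * V₀ᴴ := by
      simp only [Matrix.mul_assoc]
    rw [this, hDD, Matrix.mul_one, hV0u']
  have hVdet : V.det = 1 := by
    rw [hVdef2, Matrix.det_mul, ← hddef, hDdef, Matrix.det_diagonal, hgdef]
    simp only [Finset.prod_ite_eq', Finset.mem_univ, if_pos]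
    exact mul_inv_cancel₀ hd0
  set B : Matrix (Fin N) (Fin N) ℂ :=
    Matrix.reindex e e (Matrix.fromBlocks (Ohat θ) 0 0 1) with hBdef
  have hDBD : D * B * Dᴴ = B₀ := by
    rw [hDH, hDdef]
    ext j k
    simp only [Matrix.diagonal_mul, Matrix.mul_diagonal]
    obtain ⟨j', rfl⟩ := e.surjective j
    obtain ⟨k', rfl⟩ := e.surjective k
    rw [hBdef, hB0def, hM0def]
    simp only [Matrix.reindex_apply, Matrix.submatrix_apply, Equiv.symm_apply_apply]
    rcases j' with a | a <;> rcases k' with c | c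
    · fin_cases a <;> fin_cases c <;> beta_reduce <;> simp only [Fin.zero_eta, Fin.mk_one]
      · simp [Ohat]
      · rw [Matrix.fromBlocks_apply₁₁, Matrix.fromBlocks_apply₁₁]
        have hO : Ohat θ 0 1 = Complex.I * Complex.exp (-(Complex.I * (θ : ℂ))) := by
          simp [Ohat]
        rw [hO, key0, he0, he1]
        simp only [hgdef, if_pos rfl, if_neg (Ne.symm hi01)]
        rw [star_one, mul_one]
        field_simp
        simp
      · rw [Matrix.fromBlocks_apply₁₁, Matrix.fromBlocks_apply₁₁]
        have hO : Ohat θ 1 0 = Complex.I * Complex.exp (Complex.I * (θ : ℂ)) := by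
          simp [Ohat]
        rw [hO, key1, he0, he1]
        simp only [hgdef, if_pos rfl, if_neg (Ne.symm hi01)]
        have hsdi : star (d⁻¹ : ℂ) = d := by rw [star_inv₀, hsd, inv_inv]
        rw [one_mul, hsdi, hsd]
        simp [mul_assoc, inv_mul_cancel₀ hd0]
      · simp [Ohat]
    · simp
    · simp
    · have ha : g (e (Sum.inr a)) = 1 := by simp [hgdef, heinr0 a]
      have hc : g (e (Sum.inr c)) = 1 := by simp [hgdef, heinr0 c]
      rw [ha, hc, star_one, one_mul, mul_one]
      rw [Matrix.fromBlocks_apply₂₂, Matrix.fromBlocks_apply₂₂]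
  refine ⟨θ, V, hVu, hVdet, ?_⟩
  rw [← hBdef]
  rw [hVdef2, Matrix.conjTranspose_mul]
  have hassoc : V₀ * D * B * (Dᴴ * V₀ᴴ) = V₀ * (D * B * Dᴴ) * V₀ᴴ := by
    simp only [Matrix.mul_assoc]
  rw [hassoc, hDBD, ← hTV, Matrix.mul_assoc, hV0u', Matrix.mul_one]
end

section
/- Let N ≥ 2 and θ ∈ ℝ. Let Ô(θ) = !![0, i·exp(−iθ); i·exp(iθ), 0] and consider the N×N block matrices Ô(θ) ⊕ 0_{N−2} (block diagonal with Ô(θ) and the zero (N−2)×(N−2) matrix) and Ô(θ) ⊕ I_{N−2} (block diagonal with Ô(θ) and the identity). Then exp((π/2) • (Ô(θ) ⊕ 0_{N−2})) = Ô(θ) ⊕ I_{N−2}; that is, (π/2)•(Ô(θ) ⊕ 0) is a logarithm of the N-level swap gate Ô(θ) ⊕ I. -/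
open Matrix Complex NormedSpace

section Blocks
variable {m n : Type*} [Fintype m] [Fintype n] [DecidableEq m] [DecidableEq n]

noncomputable def fromBlocksAlgHom :
    (Matrix m m ℂ × Matrix n n ℂ) →ₐ[ℂ] Matrix (m ⊕ n) (m ⊕ n) ℂ where
  toFun p := Matrix.fromBlocks p.1 0 0 p.2
  map_one' := Matrix.fromBlocks_one
  map_mul' p q := by simp [Matrix.fromBlocks_multiply]
  map_zero' := by simp
  map_add' p q := by simp [Matrix.fromBlocks_add]
  commutes' c := by
    simp only [Algebra.algebraMap_eq_smul_one, Prod.smul_fst, Prod.smul_snd, Prod.fst_one,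
      Prod.snd_one, ← Matrix.fromBlocks_one (l := m) (m := n), Matrix.fromBlocks_smul,
      smul_zero]

lemma exp_fromBlocks (A : Matrix m m ℂ) (B : Matrix n n ℂ) :
    exp (Matrix.fromBlocks A 0 0 B) = Matrix.fromBlocks (exp A) 0 0 (exp B) := by
  letI : SeminormedRing (Matrix m m ℂ) := Matrix.linftyOpSemiNormedRing
  letI : NormedRing (Matrix m m ℂ) := Matrix.linftyOpNormedRing
  letI : NormedAlgebra ℂ (Matrix m m ℂ) := Matrix.linftyOpNormedAlgebra
  letI : NormedAlgebra ℚ (Matrix m m ℂ) := Matrix.linftyOpNormedAlgebra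
  letI : SeminormedRing (Matrix n n ℂ) := Matrix.linftyOpSemiNormedRing
  letI : NormedRing (Matrix n n ℂ) := Matrix.linftyOpNormedRing
  letI : NormedAlgebra ℂ (Matrix n n ℂ) := Matrix.linftyOpNormedAlgebra
  letI : NormedAlgebra ℚ (Matrix n n ℂ) := Matrix.linftyOpNormedAlgebra
  letI : SeminormedRing (Matrix (m ⊕ n) (m ⊕ n) ℂ) := Matrix.linftyOpSemiNormedRing
  letI : NormedRing (Matrix (m ⊕ n) (m ⊕ n) ℂ) := Matrix.linftyOpNormedRing
  letI : NormedAlgebra ℂ (Matrix (m ⊕ n) (m ⊕ n) ℂ) := Matrix.linftyOpNormedAlgebra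
  letI : NormedAlgebra ℚ (Matrix (m ⊕ n) (m ⊕ n) ℂ) := Matrix.linftyOpNormedAlgebra
  have hc : Continuous (fromBlocksAlgHom (m := m) (n := n)) :=
    (fromBlocksAlgHom (m := m) (n := n)).toLinearMap.continuous_of_finiteDimensional
  have h := map_exp (fromBlocksAlgHom (m := m) (n := n)) hc (A, B)
  have h2 : exp ((A, B) : Matrix m m ℂ × Matrix n n ℂ) = (exp A, exp B) :=
    Prod.ext (Prod.fst_exp _) (Prod.snd_exp _)
  erw [h2] at h
  exact h.symm

lemma exp_reindex {N' : Type*} [Fintype N'] [DecidableEq N'] (e : (m ⊕ n) ≃ N')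
    (A : Matrix (m ⊕ n) (m ⊕ n) ℂ) :
    exp (Matrix.reindex e e A) = Matrix.reindex e e (exp A) := by
  letI : SeminormedRing (Matrix (m ⊕ n) (m ⊕ n) ℂ) := Matrix.linftyOpSemiNormedRing
  letI : NormedRing (Matrix (m ⊕ n) (m ⊕ n) ℂ) := Matrix.linftyOpNormedRing
  letI : NormedAlgebra ℂ (Matrix (m ⊕ n) (m ⊕ n) ℂ) := Matrix.linftyOpNormedAlgebra
  letI : NormedAlgebra ℚ (Matrix (m ⊕ n) (m ⊕ n) ℂ) := Matrix.linftyOpNormedAlgebra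
  letI : SeminormedRing (Matrix N' N' ℂ) := Matrix.linftyOpSemiNormedRing
  letI : NormedRing (Matrix N' N' ℂ) := Matrix.linftyOpNormedRing
  letI : NormedAlgebra ℂ (Matrix N' N' ℂ) := Matrix.linftyOpNormedAlgebra
  letI : NormedAlgebra ℚ (Matrix N' N' ℂ) := Matrix.linftyOpNormedAlgebra
  have hc : Continuous (Matrix.reindexAlgEquiv ℂ ℂ e) :=
    (Matrix.reindexAlgEquiv ℂ ℂ e).toLinearMap.continuous_of_finiteDimensional
  exact (map_exp (Matrix.reindexAlgEquiv ℂ ℂ e) hc A).symm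

end Blocks

lemma exp_Ohat (θ : ℝ) : exp ((Real.pi / 2 : ℝ) • Ohat θ) = Ohat θ := by
  set a : ℂ := Complex.exp (Complex.I * (θ : ℂ)) with ha
  have ha0 : a ≠ 0 := Complex.exp_ne_zero _
  set P : Matrix (Fin 2) (Fin 2) ℂ := !![1, 1; a, -a] with hP
  set Q : Matrix (Fin 2) (Fin 2) ℂ := !![1/2, 1/(2*a); 1/2, -(1/(2*a))] with hQ
  have hPQ : P * Q = 1 := by
    rw [hP, hQ, Matrix.mul_fin_two]
    ext i j
    fin_cases i <;> fin_cases j <;>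
      (simp [Matrix.one_apply]; try field_simp) <;> ring
  have hPinv : P⁻¹ = Q := Matrix.inv_eq_right_inv hPQ
  have hunit : IsUnit P := (Matrix.isUnit_iff_isUnit_det P).mpr
    (Matrix.isUnit_det_of_right_inverse hPQ)
  have hd : ∀ c : ℂ, Matrix.diagonal ![c, -c] = !![c, 0; 0, -c] := by
    intro c
    ext i j
    fin_cases i <;> fin_cases j <;> simp
  have key : ∀ c : ℂ, P * Matrix.diagonal ![c, -c] * Q =
      !![0, c / a; c * a, 0] := by
    intro c
    rw [hP, hQ, hd, Matrix.mul_fin_two, Matrix.mul_fin_two]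
    ext i j
    fin_cases i <;> fin_cases j <;> (simp; try field_simp) <;> ring
  have hinvexp : Complex.exp (-(Complex.I * (θ : ℂ))) = 1 / a := by
    rw [ha, Complex.exp_neg, one_div]
  have hOhat : (Real.pi / 2 : ℝ) • Ohat θ =
      P * Matrix.diagonal ![(Real.pi / 2 : ℂ) * Complex.I, -((Real.pi / 2 : ℂ) * Complex.I)] * Q := by
    rw [key]
    ext i j
    fin_cases i <;> fin_cases j <;>
      (simp [Ohat, hinvexp]; try field_simp) <;> ring
  rw [hOhat, ← hPinv,
    Matrix.exp_conj P (Matrix.diagonal ![(Real.pi / 2 : ℂ) * Complex.I,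
      -((Real.pi / 2 : ℂ) * Complex.I)]) hunit,
    hPinv, Matrix.exp_diagonal]
  have e1 : Complex.exp ((Real.pi / 2 : ℂ) * Complex.I) = Complex.I := by
    rw [show ((Real.pi / 2 : ℂ) * Complex.I) = ((Real.pi/2 : ℝ) : ℂ) * Complex.I by push_cast; ring,
      Complex.exp_mul_I]
    simp
  have e2 : Complex.exp (-((Real.pi / 2 : ℂ) * Complex.I)) = -Complex.I := by
    rw [show (-((Real.pi / 2 : ℂ) * Complex.I)) = ((-(Real.pi/2) : ℝ) : ℂ) * Complex.I by
        push_cast; ring,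
      Complex.exp_mul_I]
    simp
  have hexpd : exp (![(Real.pi / 2 : ℂ) * Complex.I, -((Real.pi / 2 : ℂ) * Complex.I)]) =
      ![Complex.I, -Complex.I] := by
    rw [Pi.exp_def]
    funext i
    fin_cases i <;> simp [← Complex.exp_eq_exp_ℂ, e1, e2]
  rw [hexpd, key]
  ext i j
  fin_cases i <;> fin_cases j <;> (simp [Ohat, hinvexp]; try field_simp) <;> exact ha

/-- `(π/2) • (Ô(θ) ⊕ 0_{N−2})` is a logarithm of the `N`-level swap gate
`Ô(θ) ⊕ I_{N−2}`: its matrix exponential equals `Ô(θ) ⊕ I_{N−2}`. -/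
theorem exp_log_of_swap_gate {N : ℕ} (hN : 2 ≤ N) (θ : ℝ) :
    exp ((Real.pi / 2 : ℝ) •
        (Matrix.reindex (finSumFinEquiv.trans (finCongr (Nat.add_sub_cancel' hN)))
          (finSumFinEquiv.trans (finCongr (Nat.add_sub_cancel' hN)))
          (Matrix.fromBlocks (Ohat θ) 0 0 (0 : Matrix (Fin (N - 2)) (Fin (N - 2)) ℂ))))
      = Matrix.reindex (finSumFinEquiv.trans (finCongr (Nat.add_sub_cancel' hN)))
          (finSumFinEquiv.trans (finCongr (Nat.add_sub_cancel' hN)))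
          (Matrix.fromBlocks (Ohat θ) 0 0 (1 : Matrix (Fin (N - 2)) (Fin (N - 2)) ℂ)) := by
  set e := finSumFinEquiv.trans (finCongr (Nat.add_sub_cancel' hN))
  have hsmul : (Real.pi / 2 : ℝ) •
      (Matrix.reindex e e (Matrix.fromBlocks (Ohat θ) 0 0
        (0 : Matrix (Fin (N - 2)) (Fin (N - 2)) ℂ)))
      = Matrix.reindex e e (Matrix.fromBlocks ((Real.pi / 2 : ℝ) • Ohat θ) 0 0 0) := by
    ext i j
    simp only [Matrix.reindex_apply, Matrix.smul_apply, Matrix.submatrix_apply]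
    cases e.symm i <;> cases e.symm j <;>
      simp [Matrix.fromBlocks, Complex.real_smul]
  rw [hsmul, exp_reindex, exp_fromBlocks, exp_Ohat, NormedSpace.exp_zero]
end

section
/- Let N ≥ 2, θ ∈ ℝ, let V be an N×N unitary complex matrix, and let p ≥ 1 be a natural number. Set L = (π/2) • (V * (Ô(θ) ⊕ 0_{N−2}) * V†) and K = i • L (a Hermitian matrix whose smallest eigenvalue is −π/2), and let ψ = V e₀ where e₀ is the first standard basis vector of ℂᴺ. Then (⟨ψ, (K + (π/2)•1)^p ψ⟩)^{1/p} = π / 2^{1/p}; that is, the value of the p-th central moment function G_p^{ψ} at the logarithm of the swap gate O_V = V(Ô(θ) ⊕ I)V† equals π/2^{1/p}. -/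
open Matrix Complex

lemma Amat_sq (θ : ℝ) :
    (Complex.I • Ohat θ + 1) * (Complex.I • Ohat θ + 1) = (2:ℂ) • (Complex.I • Ohat θ + 1) := by
  ext i j
  fin_cases i <;> fin_cases j <;>
    simp [Ohat, Matrix.mul_apply, Fin.sum_univ_two, Matrix.one_apply, ← Complex.exp_add] <;>
    ring_nf <;>
    simp [Complex.I_sq, ← Complex.exp_add] <;> ring_nf

lemma Amat_pow (θ : ℝ) (n : ℕ) :
    (Complex.I • Ohat θ + 1) ^ (n + 1) = (2:ℂ)^n • (Complex.I • Ohat θ + 1) := by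
  induction n with
  | zero => simp
  | succ n ih =>
    rw [pow_succ, ih, Matrix.smul_mul, Amat_sq, smul_smul, pow_succ]

lemma myconj_pow {N : ℕ} (V B : Matrix (Fin N) (Fin N) ℂ) (hVV : Vᴴ * V = 1) (p : ℕ) :
    1 ≤ p → (V * B * Vᴴ) ^ p = V * B ^ p * Vᴴ := by
  induction p with
  | zero => omega
  | succ n ih =>
    intro _
    rcases Nat.eq_zero_or_pos n with h | h
    · simp [h]
    · rw [pow_succ, ih h, pow_succ]
      calc V * B ^ n * Vᴴ * (V * B * Vᴴ) = V * B ^ n * (Vᴴ * V) * B * Vᴴ := by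
            simp only [Matrix.mul_assoc]
        _ = V * (B ^ n * B) * Vᴴ := by rw [hVV]; simp only [Matrix.mul_assoc, Matrix.mul_one]

lemma fromBlocks_pow {m n : Type*} [Fintype m] [Fintype n] [DecidableEq m] [DecidableEq n]
    (A : Matrix m m ℂ) (p : ℕ) :
    (Matrix.fromBlocks A 0 0 (1 : Matrix n n ℂ)) ^ p = Matrix.fromBlocks (A ^ p) 0 0 1 := by
  induction p with
  | zero => simp [Matrix.fromBlocks_one]
  | succ k ih => rw [pow_succ, ih, Matrix.fromBlocks_multiply]; simp [pow_succ]

/-- The value of the `p`-th central moment function `G_p^{ψ}` at the logarithm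
`L = (π/2) • V (Ô(θ) ⊕ 0) V†` of the swap gate `O_V = V (Ô(θ) ⊕ I) V†`, in the state
`ψ = V e₀`, equals `π / 2^{1/p}`: writing `K = i • L` (a Hermitian matrix with smallest
eigenvalue `−π/2`), we have `(⟨ψ, (K + (π/2)•1)^p ψ⟩)^{1/p} = π / 2^{1/p}`. -/
theorem centralMoment_of_swap_gate_log
    {N : ℕ} (hN : 2 ≤ N) (θ : ℝ) (V : Matrix (Fin N) (Fin N) ℂ) (hV : V * Vᴴ = 1)
    (p : ℕ) (hp : 1 ≤ p)
    (L K : Matrix (Fin N) (Fin N) ℂ) (ψ : Fin N → ℂ)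
    (hL : L = (Real.pi / 2 : ℝ) •
        (V * (Matrix.reindex (finSumFinEquiv.trans (finCongr (Nat.add_sub_cancel' hN)))
                (finSumFinEquiv.trans (finCongr (Nat.add_sub_cancel' hN)))
                (Matrix.fromBlocks (Ohat θ) 0 0 (0 : Matrix (Fin (N - 2)) (Fin (N - 2)) ℂ))) * Vᴴ))
    (hK : K = Complex.I • L)
    (hψ : ψ = V *ᵥ Pi.single (⟨0, by omega⟩ : Fin N) 1) :
    ((star ψ ⬝ᵥ ((K + (Real.pi / 2 : ℝ) • (1 : Matrix (Fin N) (Fin N) ℂ)) ^ p *ᵥ ψ)).re) ^ (1 / (p : ℝ))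
      = Real.pi / (2 : ℝ) ^ (1 / (p : ℝ)) := by
  have hVV : Vᴴ * V = 1 := mul_eq_one_comm.mp hV
  set e : Fin 2 ⊕ Fin (N - 2) ≃ Fin N :=
    finSumFinEquiv.trans (finCongr (Nat.add_sub_cancel' hN)) with he
  set A : Matrix (Fin 2) (Fin 2) ℂ := Complex.I • Ohat θ + 1 with hA
  set B : Matrix (Fin N) (Fin N) ℂ :=
    Matrix.reindex e e (Matrix.fromBlocks A 0 0 (1 : Matrix (Fin (N-2)) (Fin (N-2)) ℂ)) with hB
  have hsum : K + (Real.pi / 2 : ℝ) • (1 : Matrix (Fin N) (Fin N) ℂ)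
      = (Real.pi / 2 : ℝ) • (V * B * Vᴴ) := by
    subst hK hL
    have hBeq : B = Complex.I •
        (Matrix.reindex e e (Matrix.fromBlocks (Ohat θ) 0 0 (0 : Matrix (Fin (N-2)) (Fin (N-2)) ℂ)))
        + 1 := by
      rw [hB, hA]
      have h1 : Matrix.fromBlocks (Complex.I • Ohat θ + 1) 0 0 (1 : Matrix (Fin (N-2)) (Fin (N-2)) ℂ)
          = Complex.I • Matrix.fromBlocks (Ohat θ) 0 0 0 + 1 := by
        rw [← Matrix.fromBlocks_one, Matrix.fromBlocks_smul, Matrix.fromBlocks_add]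
        simp
      rw [h1]
      simp [Matrix.reindex_apply, Matrix.submatrix_add, Matrix.submatrix_smul,
        Matrix.submatrix_one_equiv]
    rw [hBeq]
    simp only [Matrix.mul_add, Matrix.add_mul, Matrix.mul_one, hV, smul_add,
      Matrix.mul_smul, Matrix.smul_mul]
    rw [smul_comm]
  rw [hsum, smul_pow, myconj_pow V B hVV p hp]
  have hquad : ∀ Y : Matrix (Fin N) (Fin N) ℂ,
      star ψ ⬝ᵥ ((V * Y * Vᴴ) *ᵥ ψ) = Y ⟨0, by omega⟩ ⟨0, by omega⟩ := by
    intro Y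
    subst hψ
    rw [Matrix.star_mulVec, Matrix.mulVec_mulVec, Matrix.dotProduct_mulVec,
      Matrix.vecMul_vecMul]
    have : Vᴴ * (V * Y * Vᴴ * V) = Y := by
      calc Vᴴ * (V * Y * Vᴴ * V) = (Vᴴ * V) * Y * (Vᴴ * V) := by
            simp only [Matrix.mul_assoc]
        _ = Y := by rw [hVV]; simp
    rw [this]
    simp [Matrix.vecMul, dotProduct, Pi.single_apply, apply_ite (starRingEnd ℂ),
      mul_ite, ite_mul, Finset.sum_ite_eq, Finset.sum_ite_eq']
  have hKmul : ∀ (c : ℝ) (Y : Matrix (Fin N) (Fin N) ℂ),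
      star ψ ⬝ᵥ ((c • (V * Y * Vᴴ)) *ᵥ ψ) = c • (Y ⟨0, by omega⟩ ⟨0, by omega⟩) := by
    intro c Y
    rw [Matrix.smul_mulVec, dotProduct_smul, hquad Y]
  have hmid : V * B ^ p * Vᴴ = V * B ^ p * Vᴴ := rfl
  rw [show (Real.pi / 2 : ℝ) ^ p • (V * B ^ p * Vᴴ) = (Real.pi / 2 : ℝ) ^ p • (V * (B ^ p) * Vᴴ) from rfl]
  rw [hKmul ((Real.pi / 2 : ℝ) ^ p) (B ^ p)]
  -- compute B^p entry
  have hBp : B ^ p = Matrix.reindex e e (Matrix.fromBlocks (A ^ p) 0 0 1) := by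
    rw [hB]
    have : Matrix.reindex e e (Matrix.fromBlocks A 0 0 (1 : Matrix (Fin (N-2)) (Fin (N-2)) ℂ))
        = Matrix.reindexAlgEquiv ℂ ℂ e (Matrix.fromBlocks A 0 0 1) := rfl
    rw [this, ← map_pow, fromBlocks_pow]
    rfl
  have he0 : e.symm (⟨0, by omega⟩ : Fin N) = Sum.inl 0 := by
    rw [Equiv.symm_apply_eq]
    apply Fin.ext
    simp [he]
  have hApentry : (A ^ p) 0 0 = (2:ℂ) ^ (p - 1) := by
    obtain ⟨n, rfl⟩ : ∃ n, p = n + 1 := ⟨p - 1, by omega⟩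
    rw [Amat_pow]
    simp [hA, Ohat, Matrix.one_apply]
  have hentry : (B ^ p) ⟨0, by omega⟩ ⟨0, by omega⟩ = (2:ℂ) ^ (p - 1) := by
    rw [hBp]
    simp only [Matrix.reindex_apply, Matrix.submatrix_apply, he0]
    simpa using hApentry
  rw [hentry]
  have hre : ((Real.pi / 2 : ℝ) ^ p • ((2:ℂ) ^ (p - 1))).re
      = (Real.pi / 2) ^ p * 2 ^ (p - 1) := by
    have : ((Real.pi / 2 : ℝ) ^ p • ((2:ℂ) ^ (p - 1)))
        = (((Real.pi / 2) ^ p * 2 ^ (p - 1) : ℝ) : ℂ) := by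
      rw [Complex.real_smul]; push_cast; ring
    rw [this, Complex.ofReal_re]
  rw [hre]
  have hval : (Real.pi / 2) ^ p * 2 ^ (p - 1) = Real.pi ^ p / 2 := by
    obtain ⟨n, rfl⟩ : ∃ n, p = n + 1 := ⟨p - 1, by omega⟩
    rw [div_pow, Nat.add_sub_cancel]
    field_simp
    ring
  rw [hval]
  have hp0 : (p : ℝ) ≠ 0 := by positivity
  rw [Real.div_rpow (by positivity) (by norm_num), ← Real.rpow_natCast Real.pi p,
    ← Real.rpow_mul Real.pi_pos.le, mul_one_div_cancel hp0, Real.rpow_one]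
end

section
/- (Margolus–Levitin bound for two-level systems.) Let H be a 2×2 Hermitian complex matrix with smallest eigenvalue E₀, let ψ ∈ ℂ² be a unit vector, and let t > 0 be a real number such that ⟨ψ, exp(−i t • H) ψ⟩ = 0 (the evolved state is orthogonal to the initial state). Then t · (⟨ψ, H ψ⟩ − E₀) ≥ π/2, where ⟨ψ, H ψ⟩ is the (real) energy expectation of the state ψ; equivalently, the orthogonalization time satisfies t ≥ π / (2(Ē − E₀)) with Ē = ⟨ψ, H ψ⟩. -/
open Matrix Complex NormedSpace

private lemma ml_scalar (p0 p1 E0 E1 t : ℝ) (hp0 : 0 ≤ p0) (hp1 : 0 ≤ p1)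
    (hsum : p0 + p1 = 1) (ht : 0 < t)
    (h : (p0 : ℂ) * Complex.exp (-Complex.I * t * E0)
        + (p1 : ℂ) * Complex.exp (-Complex.I * t * E1) = 0) :
    t * (p0 * E0 + p1 * E1 - min E0 E1) ≥ Real.pi / 2 := by
  have habs : ∀ x : ℝ, ‖Complex.exp (-Complex.I * t * x)‖ = 1 := by
    intro x
    rw [Complex.norm_exp]
    have : (-Complex.I * (t : ℂ) * (x : ℂ)).re = 0 := by simp
    rw [this, Real.exp_zero]
  have hpe : p0 = p1 := by
    have h' : (p0 : ℂ) * Complex.exp (-Complex.I * t * E0)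
        = -((p1 : ℂ) * Complex.exp (-Complex.I * t * E1)) :=
      eq_neg_of_add_eq_zero_left h
    have h2 := congrArg (‖·‖) h'
    simp only [norm_mul, norm_neg, habs, Complex.norm_real, Real.norm_eq_abs, mul_one] at h2
    rwa [_root_.abs_of_nonneg hp0, _root_.abs_of_nonneg hp1] at h2
  have hp0' : p0 = 1 / 2 := by linarith
  have hp1' : p1 = 1 / 2 := by linarith
  have hsum0 : Complex.exp (-Complex.I * t * E0) + Complex.exp (-Complex.I * t * E1) = 0 := by
    have h' := h
    rw [hp0', hp1'] at h'
    push_cast at h'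
    linear_combination 2 * h'
  have hexp : Complex.exp ((t * (E1 - E0) : ℝ) * Complex.I) = -1 := by
    have hA : Complex.exp (-Complex.I * t * E0) = -Complex.exp (-Complex.I * t * E1) :=
      eq_neg_of_add_eq_zero_left hsum0
    have harg : ((t * (E1 - E0) : ℝ) : ℂ) * Complex.I
        = -Complex.I * t * E0 - -Complex.I * t * E1 := by push_cast; ring
    rw [harg, Complex.exp_sub, hA, neg_div, div_self (Complex.exp_ne_zero _)]
  have hcos : Real.cos (t * (E1 - E0)) = -1 := by
    have := congrArg Complex.re hexp
    rw [Complex.exp_ofReal_mul_I_re] at this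
    simpa using this
  obtain ⟨k, hk⟩ := Real.cos_eq_neg_one_iff.mp hcos
  have hπ : Real.pi ≤ |t * (E1 - E0)| := by
    rw [← hk]
    have h1 : (1 : ℝ) ≤ |((2 * k + 1 : ℤ) : ℝ)| := by
      exact_mod_cast Int.one_le_abs (by omega)
    have h2 : Real.pi + (k : ℝ) * (2 * Real.pi) = ((2 * k + 1 : ℤ) : ℝ) * Real.pi := by
      push_cast; ring
    rw [h2, abs_mul, _root_.abs_of_nonneg Real.pi_pos.le]
    nlinarith [Real.pi_pos]
  rw [hp0', hp1']
  rcases le_total E0 E1 with hle | hle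
  · rw [min_eq_left hle]
    rw [_root_.abs_of_nonneg (mul_nonneg ht.le (by linarith))] at hπ
    nlinarith
  · rw [min_eq_right hle]
    rw [_root_.abs_of_nonpos (mul_nonpos_of_nonneg_of_nonpos ht.le (by linarith))] at hπ
    nlinarith

/-- The Margolus–Levitin bound for two-level systems: if a unit state `ψ` of a
two-level system with Hermitian Hamiltonian `H` (smallest eigenvalue `E₀`) evolves
to an orthogonal state at time `t > 0`, then `t·(Ē − E₀) ≥ π/2`, where
`Ē = ⟨ψ, H ψ⟩` is the energy expectation. -/
theorem margolus_levitin_two_level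
    (H : Matrix (Fin 2) (Fin 2) ℂ) (hH : H.IsHermitian)
    (ψ : Fin 2 → ℂ) (hψ : star ψ ⬝ᵥ ψ = 1)
    (t : ℝ) (ht : 0 < t)
    (horth : star ψ ⬝ᵥ (NormedSpace.exp (((-Complex.I) * (t : ℂ)) • H) *ᵥ ψ) = 0) :
    t * ((star ψ ⬝ᵥ (H *ᵥ ψ)).re - ⨅ i, hH.eigenvalues i) ≥ Real.pi / 2 := by
  classical
  set U : Matrix (Fin 2) (Fin 2) ℂ := (hH.eigenvectorUnitary : Matrix (Fin 2) (Fin 2) ℂ) with hU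
  set E : Fin 2 → ℝ := hH.eigenvalues with hE
  set c : Fin 2 → ℂ := star U *ᵥ ψ with hc
  have hUU : U * star U = 1 := Matrix.mem_unitaryGroup_iff.mp hH.eigenvectorUnitary.2
  have hU'U : star U * U = 1 := Matrix.mem_unitaryGroup_iff'.mp hH.eigenvectorUnitary.2
  have key : ∀ w : Fin 2 → ℂ, star ψ ⬝ᵥ ((U * diagonal w * star U) *ᵥ ψ)
      = star (c 0) * c 0 * w 0 + star (c 1) * c 1 * w 1 := by
    intro w
    have h1 : (U * diagonal w * star U) *ᵥ ψ = U *ᵥ (diagonal w *ᵥ c) := by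
      rw [hc, mulVec_mulVec, mulVec_mulVec]
    have h2 : star ψ ᵥ* U = star c := by
      rw [hc, star_mulVec, star_eq_conjTranspose, conjTranspose_conjTranspose]
    rw [h1, dotProduct_mulVec, h2, dotProduct, Fin.sum_univ_two]
    simp only [Pi.star_apply, mulVec_diagonal]
    ring
  have hspec : H = U * diagonal ((↑) ∘ E) * star U := hH.spectral_theorem
  -- the probabilities
  set p : Fin 2 → ℝ := fun i => Complex.normSq (c i) with hp
  have hcc : ∀ i, star (c i) * c i = (p i : ℂ) := by
    intro i
    rw [hp]
    simp [Complex.star_def, ← Complex.normSq_eq_conj_mul_self]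
  -- normalization
  have hnorm : p 0 + p 1 = 1 := by
    have h1 : U * diagonal (fun _ : Fin 2 => (1 : ℂ)) * star U = 1 := by
      rw [diagonal_one, mul_one, hUU]
    have h2 := key (fun _ => 1)
    rw [h1, one_mulVec, hψ, hcc, hcc, mul_one, mul_one] at h2
    exact_mod_cast h2.symm
  have hp0 : 0 ≤ p 0 := Complex.normSq_nonneg _
  have hp1 : 0 ≤ p 1 := Complex.normSq_nonneg _
  -- energy expectation
  have henergy : (star ψ ⬝ᵥ (H *ᵥ ψ)).re = p 0 * E 0 + p 1 * E 1 := by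
    have h2 := key ((↑) ∘ E)
    rw [← hspec, hcc, hcc] at h2
    rw [h2]
    simp
  -- the evolution operator
  have hinv : U⁻¹ = star U := inv_eq_left_inv hU'U
  have hIsU : IsUnit U := ⟨Unitary.toUnits hH.eigenvectorUnitary, rfl⟩
  have hexp : NormedSpace.exp (((-Complex.I) * (t : ℂ)) • H)
      = U * diagonal (fun i => Complex.exp (-Complex.I * t * E i)) * star U := by
    have hsm : ((-Complex.I) * (t : ℂ)) • H
        = U * diagonal (fun i => (-Complex.I * t) * E i) * star U := by
      rw [hspec, ← smul_mul_assoc, ← mul_smul_comm, ← diagonal_smul]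
      congr 2
    have hdiag : NormedSpace.exp (fun i : Fin 2 => (-Complex.I * (t : ℂ)) * (E i : ℂ))
        = fun i => Complex.exp (-Complex.I * t * E i) := by
      rw [Pi.exp_def]
      funext i
      rw [← Complex.exp_eq_exp_ℂ]
    rw [hsm, ← hinv, Matrix.exp_conj U _ hIsU, Matrix.exp_diagonal, hdiag, hinv]
  -- orthogonality in coordinates
  have horth' : (p 0 : ℂ) * Complex.exp (-Complex.I * t * E 0)
      + (p 1 : ℂ) * Complex.exp (-Complex.I * t * E 1) = 0 := by
    have h2 := key (fun i => Complex.exp (-Complex.I * t * E i))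
    rw [← hexp, horth] at h2
    rw [hcc, hcc] at h2
    linear_combination -h2
  have hmain := ml_scalar (p 0) (p 1) (E 0) (E 1) t hp0 hp1 hnorm ht horth'
  have hinf : (⨅ i, E i) ≤ min (E 0) (E 1) := by
    have hbdd : BddBelow (Set.range E) := (Set.finite_range E).bddBelow
    exact le_min (ciInf_le hbdd 0) (ciInf_le hbdd 1)
  rw [henergy]
  have := mul_le_mul_of_nonneg_left (sub_le_sub_left hinf (p 0 * E 0 + p 1 * E 1)) ht.le
  linarith
end
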